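/- Let X be an n × M real matrix with XᵀX invertible whose 0-th column is the all-ones vector (X e₀ = 𝟙), and for y : Fin n → ℝ define the OLS residual vector e(y) = y − X (XᵀX)⁻¹ Xᵀ y. Let K ≥ 2, r : Fin n → Fin K, l̃ : Fin K → ℝ, r̃ i = l̃ (r i), and d_k i = 1 if r i ≤ k else 0. Then e(r̃) = ∑_{k=0}^{K−2} (l̃ k − l̃ (k+1)) · e(d_k). -/

import Mathlib

open Matrix

/-- The OLS residual vector `e(y) = y − X (XᵀX)⁻¹ Xᵀ y`. -/
noncomputable def olsResid {n M : ℕ} (X : Matrix (Fin n) (Fin M) ℝ) (y : Fin n → ℝ) :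
    Fin n → ℝ :=
  y - X *ᵥ ((Xᵀ * X)⁻¹ *ᵥ (Xᵀ *ᵥ y))

/-- If the design matrix contains a constant regressor (its 0-th
column is the all-ones vector), the OLS residual vector of the transformed outcome
is the weighted sum of the residual vectors of the dichotomizations. -/
theorem stmt_7 (n M K : ℕ) [NeZero M] (hK : 2 ≤ K)
    (X : Matrix (Fin n) (Fin M) ℝ) (hX : IsUnit (Xᵀ * X))
    (hcol : X *ᵥ Pi.single (0 : Fin M) 1 = fun _ => (1 : ℝ))
    (r : Fin n → Fin K) (l : Fin K → ℝ) :
    olsResid X (fun i => l (r i)) =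
      ∑ k : Fin (K - 1),
        (l (Fin.castLE (by omega) k) - l (Fin.cast (by omega) k.succ)) •
          olsResid X (fun i => if (r i : ℕ) ≤ (k : ℕ) then (1 : ℝ) else 0) := by
  classical
  have hdet : IsUnit (Xᵀ * X).det := (Matrix.isUnit_iff_isUnit_det _).mp hX
  have hinv : (Xᵀ * X)⁻¹ * (Xᵀ * X) = 1 := Matrix.nonsing_inv_mul _ hdet
  have hres_add : ∀ y z, olsResid X (y + z) = olsResid X y + olsResid X z := by
    intro y z
    unfold olsResid
    simp [Matrix.mulVec_add]
    abel
  have hres_smul : ∀ (c : ℝ) (y), olsResid X (c • y) = c • olsResid X y := by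
    intro c y
    unfold olsResid
    simp [Matrix.mulVec_smul, smul_sub]
  have hres_zero : olsResid X 0 = 0 := by
    unfold olsResid
    simp
  have hres_sum : ∀ (s : Finset (Fin (K - 1))) (f : Fin (K - 1) → Fin n → ℝ),
      olsResid X (∑ k ∈ s, f k) = ∑ k ∈ s, olsResid X (f k) := by
    intro s f
    induction s using Finset.induction with
    | empty => simpa using hres_zero
    | insert _ _ h ih => rw [Finset.sum_insert h, Finset.sum_insert h, hres_add, ih]
  have hres_ones : olsResid X (fun _ => (1 : ℝ)) = 0 := by
    rw [← hcol]
    unfold olsResid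
    have hP : X * (Xᵀ * X)⁻¹ * Xᵀ * X = X := by
      rw [Matrix.mul_assoc (X * (Xᵀ * X)⁻¹) Xᵀ X, Matrix.mul_assoc X (Xᵀ * X)⁻¹ (Xᵀ * X),
        hinv, Matrix.mul_one]
    rw [Matrix.mulVec_mulVec, Matrix.mulVec_mulVec, Matrix.mulVec_mulVec, hP, sub_self]
  -- the telescoping decomposition of the labelled outcome
  set g : ℕ → ℝ := fun m => if h : m < K then l ⟨m, h⟩ else 0 with hg
  have hdecomp : (fun i => l (r i)) =
      (∑ k : Fin (K - 1),
        (l (Fin.castLE (by omega) k) - l (Fin.cast (by omega) k.succ)) •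
          (fun i => if (r i : ℕ) ≤ (k : ℕ) then (1 : ℝ) else 0))
      + l ⟨K - 1, by omega⟩ • (fun _ => (1 : ℝ)) := by
    funext i
    simp only [Finset.sum_apply, Pi.add_apply, Pi.smul_apply, smul_eq_mul]
    have hterm : ∀ k : Fin (K - 1),
        (l (Fin.castLE (by omega : K - 1 ≤ K) k) - l (Fin.cast (by omega : K - 1 + 1 = K) k.succ))
          * (if (r i : ℕ) ≤ (k : ℕ) then (1 : ℝ) else 0)
        = (g k - g (k + 1)) * (if (r i : ℕ) ≤ (k : ℕ) then (1 : ℝ) else 0) := by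
      intro k
      have h1 : l (Fin.castLE (by omega : K - 1 ≤ K) k) = g k := by
        have hk : (k : ℕ) < K := lt_of_lt_of_le k.isLt (by omega)
        simp [hg, hk, Fin.castLE]
      have h2 : l (Fin.cast (by omega : K - 1 + 1 = K) k.succ) = g (k + 1) := by
        have hk : (k : ℕ) + 1 < K := by omega
        simp [hg, hk, Fin.cast, Fin.succ]
      rw [h1, h2]
    rw [Finset.sum_congr rfl (fun k _ => hterm k)]
    have hri : l (r i) = g (r i) := by simp [hg, (r i).isLt]
    have htop : l ⟨K - 1, by omega⟩ = g (K - 1) := by simp [hg, (by omega : K - 1 < K)]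
    rw [hri, htop]
    rw [Fin.sum_univ_eq_sum_range
      (fun m => (g m - g (m + 1)) * (if (r i : ℕ) ≤ m then (1 : ℝ) else 0))]
    have hsplit : ∑ m ∈ Finset.range (K - 1),
        (g m - g (m + 1)) * (if (r i : ℕ) ≤ m then (1 : ℝ) else 0)
        = ∑ m ∈ Finset.Ico ((r i : ℕ)) (K - 1), (g m - g (m + 1)) := by
      rw [← Finset.sum_filter_add_sum_filter_not (Finset.range (K - 1))
        (fun m => (r i : ℕ) ≤ m)]
      have h2 : ∑ m ∈ (Finset.range (K - 1)).filter (fun m => ¬ (r i : ℕ) ≤ m),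
          (g m - g (m + 1)) * (if (r i : ℕ) ≤ m then (1 : ℝ) else 0) = 0 := by
        apply Finset.sum_eq_zero
        intro m hm
        simp only [Finset.mem_filter] at hm
        simp [hm.2]
      rw [h2, add_zero]
      have hfil : (Finset.range (K - 1)).filter (fun m => (r i : ℕ) ≤ m)
          = Finset.Ico ((r i : ℕ)) (K - 1) := by
        ext m
        simp only [Finset.mem_filter, Finset.mem_range, Finset.mem_Ico]
        omega
      rw [hfil]
      apply Finset.sum_congr rfl
      intro m hm
      simp only [Finset.mem_Ico] at hm
      simp [hm.1]
    rw [hsplit, Finset.sum_Ico_eq_sum_range]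
    have := Finset.sum_range_sub' (fun j => g ((r i : ℕ) + j)) (K - 1 - (r i : ℕ))
    simp only [Nat.add_zero] at this
    have hcast : ∑ j ∈ Finset.range (K - 1 - (r i : ℕ)),
        (g ((r i : ℕ) + j) - g ((r i : ℕ) + j + 1))
        = g (r i) - g ((r i : ℕ) + (K - 1 - (r i : ℕ))) := by
      rw [← this]
      exact Finset.sum_congr rfl fun j _ => by rw [Nat.add_assoc]
    rw [hcast]
    have hle : (r i : ℕ) + (K - 1 - (r i : ℕ)) = K - 1 := by
      have := (r i).isLt; omega
    rw [hle]
    ring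
  rw [hdecomp, hres_add, hres_sum, hres_smul, hres_ones, smul_zero, add_zero]
  apply Finset.sum_congr rfl
  intro k _
  rw [hres_smul]
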